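/- Let F be a field of prime characteristic p, let n < p, and let A ∈ M_n(F) be a nil-clean matrix with trace equal to 0. Then A is nilpotent. -/

import Mathlib

/-- An element of a ring is *nil-clean* if it is the sum of an idempotent
and a nilpotent element. -/
def IsNilClean {R : Type*} [Ring R] (a : R) : Prop :=
  ∃ e n : R, e ^ 2 = e ∧ IsNilpotent n ∧ a = e + n

/-- Over a field of prime characteristic `p`, with `n < p`, a nil-clean `n × n`
matrix of trace `0` is nilpotent. -/
theorem stmt_9 {F : Type*} [Field F] {p : ℕ} (hp : p.Prime) [CharP F p] {n : ℕ}
    (hnp : n < p) (A : Matrix (Fin n) (Fin n) F) (hA : IsNilClean A)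
    (htr : A.trace = 0) :
    IsNilpotent A := by
  obtain ⟨E, N, hE, hN, rfl⟩ := hA
  have htrN : Matrix.trace N = 0 :=
    (Matrix.isNilpotent_trace_of_isNilpotent hN).eq_zero
  have htrE : Matrix.trace E = 0 := by
    rw [Matrix.trace_add, htrN, add_zero] at htr; exact htr
  -- the idempotent has trace equal to its rank, which must then be 0
  set f := Matrix.toLin' E with hf
  have hff : f ∘ₗ f = f := by
    rw [hf, ← Matrix.toLin'_mul, ← pow_two, hE]
  obtain ⟨q, hq⟩ := (LinearMap.isProj_iff_isIdempotentElem f).mpr hff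
  have htrf : LinearMap.trace F (Fin n → F) f = (Module.finrank F q : F) :=
    hq.trace
  have htrf' : LinearMap.trace F (Fin n → F) f = Matrix.trace E := by
    rw [LinearMap.trace_eq_matrix_trace F (Pi.basisFun F (Fin n)) f]
    rw [LinearMap.toMatrix_eq_toMatrix', hf, LinearMap.toMatrix'_toLin']
  have hrank : (Module.finrank F q : F) = 0 := by rw [← htrf, htrf', htrE]
  have hdvd : p ∣ Module.finrank F q := (CharP.cast_eq_zero_iff F p _).mp hrank
  have hle : Module.finrank F q ≤ n := by
    simpa using Submodule.finrank_le q
  have h0 : Module.finrank F q = 0 := by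
    rcases Nat.eq_zero_of_dvd_of_lt hdvd (lt_of_le_of_lt hle hnp) with h
    · exact h
  have hq0 : q = ⊥ := Submodule.finrank_eq_zero.mp h0
  have hf0 : f = 0 := by
    apply LinearMap.ext
    intro x
    have := hq.map_mem x
    rw [hq0, Submodule.mem_bot] at this
    simpa using this
  have hE0 : E = 0 := by
    have := congrArg Matrix.toLin'.symm (hf ▸ hf0.symm)
    simpa using this.symm
  rw [hE0, zero_add]
  exact hN
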